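/- Let X₁,…,X_M, X, Y be i.i.d. from a continuous density f on ℝ^d, and let ê_u(Z) = f̂_u(Z) - E[f̂_u(Z)|Z] be the centered uniform-kernel density estimation error with kernel volume V_u = k/M. If the kernel balls at X and Y are disjoint (i.e. ‖X-Y‖ ≥ 2(k/(c_d M))^{1/d}), then Cov[ê_u(X), ê_u(Y) | X, Y] = -f(X)f(Y)/M + o(1/M). -/

import Mathlib

open MeasureTheory ProbabilityTheory Filter Asymptotics
open scoped Classical ENNReal

lemma cov_aux {Ω : Type*} [MeasurableSpace Ω] (μ : Measure Ω) [IsProbabilityMeasure μ]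
    (M : ℕ) (A B : ℕ → Set Ω) (hA : ∀ i, MeasurableSet (A i)) (hB : ∀ i, MeasurableSet (B i))
    (p q : ℝ≥0∞) (hp : ∀ i, μ (A i) = p) (hq : ∀ i, μ (B i) = q)
    (hdiag : ∀ i, μ (A i ∩ B i) = 0)
    (hoff : ∀ i j, i ≠ j → μ (A i ∩ B j) = p * q)
    (S T : Ω → ℝ)
    (hS : S = fun ω => ∑ i ∈ Finset.range M, (A i).indicator (1 : Ω → ℝ) ω)
    (hT : T = fun ω => ∑ i ∈ Finset.range M, (B i).indicator (1 : Ω → ℝ) ω) :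
    ∫ ω, (S ω - ∫ ω', S ω' ∂μ) * (T ω - ∫ ω', T ω' ∂μ) ∂μ
      = -(M : ℝ) * p.toReal * q.toReal := by
  have hind1 : ∀ s : Set Ω, MeasurableSet s → Integrable (s.indicator (1 : Ω → ℝ)) μ :=
    fun s hs => (integrable_const (1:ℝ)).indicator hs
  have hSi : Integrable S μ := by
    rw [hS]; exact integrable_finset_sum _ fun i _ => hind1 _ (hA i)
  have hTi : Integrable T μ := by
    rw [hT]; exact integrable_finset_sum _ fun i _ => hind1 _ (hB i)
  have hIS : ∫ ω, S ω ∂μ = (M : ℝ) * p.toReal := by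
    simp only [hS]
    rw [integral_finset_sum _ fun i _ => hind1 _ (hA i)]
    have h1 : ∀ i ∈ Finset.range M, ∫ ω, (A i).indicator (1:Ω→ℝ) ω ∂μ = p.toReal := fun i _ => by
      rw [integral_indicator_one (hA i), measureReal_def, hp i]
    rw [Finset.sum_congr rfl h1, Finset.sum_const, Finset.card_range, nsmul_eq_mul]
  have hIT : ∫ ω, T ω ∂μ = (M : ℝ) * q.toReal := by
    simp only [hT]
    rw [integral_finset_sum _ fun i _ => hind1 _ (hB i)]
    have h1 : ∀ i ∈ Finset.range M, ∫ ω, (B i).indicator (1:Ω→ℝ) ω ∂μ = q.toReal := fun i _ => by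
      rw [integral_indicator_one (hB i), measureReal_def, hq i]
    rw [Finset.sum_congr rfl h1, Finset.sum_const, Finset.card_range, nsmul_eq_mul]
  have hST : ∀ ω, S ω * T ω
      = ∑ i ∈ Finset.range M, ∑ j ∈ Finset.range M, ((A i) ∩ (B j)).indicator (1:Ω→ℝ) ω := by
    intro ω
    rw [hS, hT]
    dsimp only
    rw [Finset.sum_mul_sum]
    refine Finset.sum_congr rfl fun i _ => Finset.sum_congr rfl fun j _ => ?_
    exact (congrFun Set.inter_indicator_one ω).symm
  have hSTi : Integrable (fun ω => S ω * T ω) μ := by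
    have : (fun ω => S ω * T ω)
        = fun ω => ∑ i ∈ Finset.range M, ∑ j ∈ Finset.range M,
            ((A i) ∩ (B j)).indicator (1:Ω→ℝ) ω := funext hST
    rw [this]
    exact integrable_finset_sum _ fun i _ => integrable_finset_sum _ fun j _ =>
      hind1 _ ((hA i).inter (hB j))
  have hIST : ∫ ω, S ω * T ω ∂μ
      = (M:ℝ) * ((M:ℝ) * (p.toReal * q.toReal) - p.toReal * q.toReal) := by
    have h0 : (fun ω => S ω * T ω)
        = fun ω => ∑ i ∈ Finset.range M, ∑ j ∈ Finset.range M,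
            ((A i) ∩ (B j)).indicator (1:Ω→ℝ) ω := funext hST
    rw [h0, integral_finset_sum _ fun i _ => integrable_finset_sum _ fun j _ =>
      hind1 _ ((hA i).inter (hB j))]
    have h1 : ∀ i ∈ Finset.range M,
        ∫ ω, (∑ j ∈ Finset.range M, ((A i) ∩ (B j)).indicator (1:Ω→ℝ) ω) ∂μ
          = (M:ℝ) * (p.toReal * q.toReal) - p.toReal * q.toReal := by
      intro i hi
      rw [integral_finset_sum _ fun j _ => hind1 _ ((hA i).inter (hB j))]
      have h2 : ∀ j ∈ Finset.range M, ∫ ω, ((A i) ∩ (B j)).indicator (1:Ω→ℝ) ω ∂μ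
          = p.toReal * q.toReal - (if j = i then p.toReal * q.toReal else 0) := by
        intro j _
        rw [integral_indicator_one ((hA i).inter (hB j))]
        by_cases h : j = i
        · subst h; rw [measureReal_def, hdiag j]; simp
        · rw [measureReal_def, hoff i j (Ne.symm h), ENNReal.toReal_mul]; simp [h]
      rw [Finset.sum_congr rfl h2, Finset.sum_sub_distrib, Finset.sum_const, Finset.card_range,
        Finset.sum_ite_eq' (Finset.range M) i, if_pos hi, nsmul_eq_mul]
    rw [Finset.sum_congr rfl h1, Finset.sum_const, Finset.card_range, nsmul_eq_mul]
  set a := ∫ ω, S ω ∂μ with ha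
  set b := ∫ ω, T ω ∂μ with hb
  have key : ∫ ω, (S ω - a) * (T ω - b) ∂μ = (∫ ω, S ω * T ω ∂μ) - a * b := by
    have h1 : Integrable (fun ω => a * T ω) μ := hTi.const_mul a
    have h2 : Integrable (fun ω => b * S ω) μ := hSi.const_mul b
    have h4 : Integrable (fun _ : Ω => a * b) μ := integrable_const _
    calc ∫ ω, (S ω - a) * (T ω - b) ∂μ
        = ∫ ω, ((S ω * T ω - a * T ω) - (b * S ω - a * b)) ∂μ :=
          integral_congr_ae (Filter.Eventually.of_forall fun ω => by ring)
      _ = (∫ ω, (S ω * T ω - a * T ω) ∂μ) - ∫ ω, (b * S ω - a * b) ∂μ :=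
          integral_sub (hSTi.sub h1) (h2.sub h4)
      _ = ((∫ ω, S ω * T ω ∂μ) - a * b) := by
          rw [integral_sub hSTi h1, integral_sub h2 h4, integral_const_mul, integral_const_mul,
            integral_const]
          simp only [measureReal_def, measure_univ, ENNReal.toReal_one, one_smul]
          rw [← ha, ← hb]
          ring
  rw [key, hIST, hIS, hIT]
  ring
/-- Let `X₁, X₂, …` be i.i.d. samples from a continuous density `f` on `ℝᵈ`, and for each
sample size `M` let `ê_u(z)` be the centered uniform-kernel density estimation error with
kernel volume `k(M)/M` (so kernel radius `r(M) = (k/(c_d M))^{1/d}`).  If the kernel balls at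
the fixed points `x` and `y` are disjoint (`dist x y ≥ 2 r(M)`), then
`Cov[ê_u(x), ê_u(y)] = -f(x)f(y)/M + o(1/M)`. -/
theorem stmt6 (d : ℕ) (hd : 0 < d)
    {Ω : Type*} [MeasurableSpace Ω] (μ : Measure Ω) [IsProbabilityMeasure μ]
    (X : ℕ → Ω → EuclideanSpace ℝ (Fin d))
    (hXm : ∀ i, Measurable (X i))
    (hindep : iIndepFun X μ)
    (f : EuclideanSpace ℝ (Fin d) → ℝ)
    (hf_cont : Continuous f) (hf_nonneg : ∀ z, 0 ≤ f z)
    (hf_int : ∫ z, f z = 1)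
    (hlaw : ∀ i, Measure.map (X i) μ
      = volume.withDensity (fun z => ENNReal.ofReal (f z)))
    (k : ℕ → ℕ)
    (hk : Tendsto (fun M => (k M : ℝ)) atTop atTop)
    (hkM : Tendsto (fun M => (k M : ℝ) / M) atTop (nhds 0))
    (x y : EuclideanSpace ℝ (Fin d)) :
    let cd : ℝ := (volume (Metric.ball (0 : EuclideanSpace ℝ (Fin d)) 1)).toReal
    let r : ℕ → ℝ := fun M => ((k M : ℝ) / (cd * M)) ^ (1 / (d:ℝ))
    let fhat : ℕ → EuclideanSpace ℝ (Fin d) → Ω → ℝ := fun M z ω =>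
      (((Finset.range M).filter (fun i => X i ω ∈ Metric.closedBall z (r M))).card : ℝ) / k M
    let ehat : ℕ → EuclideanSpace ℝ (Fin d) → Ω → ℝ := fun M z ω =>
      fhat M z ω - ∫ ω', fhat M z ω' ∂μ
    (∀ M, 2 * r M ≤ dist x y) →
    (fun M => (∫ ω, ehat M x ω * ehat M y ω ∂μ) + f x * f y / M)
      =o[atTop] (fun M => 1 / (M:ℝ)) := by
  intro cd r fhat ehat hdist
  haveI : Nontrivial (EuclideanSpace ℝ (Fin d)) :=
    Module.nontrivial_of_finrank_pos (R := ℝ)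
      (by rw [finrank_euclideanSpace_fin]; exact hd)
  -- basic facts
  have hcd : 0 < cd :=
    ENNReal.toReal_pos (Metric.measure_ball_pos volume 0 one_pos).ne' measure_ball_lt_top.ne
  have hd' : ((d:ℝ)) ≠ 0 := Nat.cast_ne_zero.2 hd.ne'
  have hbase : ∀ M : ℕ, (0:ℝ) ≤ (k M : ℝ) / (cd * M) := fun M => by positivity
  have hr0 : ∀ M : ℕ, 0 ≤ r M := fun M => Real.rpow_nonneg (hbase M) _
  have hrpow : ∀ M : ℕ, r M ^ d = (k M : ℝ) / (cd * M) := by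
    intro M
    have h1 : ((1:ℝ)/d) * d = 1 := by field_simp
    calc r M ^ d = (((k M : ℝ) / (cd * M)) ^ ((1:ℝ)/(d:ℝ))) ^ ((d:ℕ):ℝ) :=
          (Real.rpow_natCast _ d).symm
      _ = ((k M : ℝ) / (cd * M)) ^ (((1:ℝ)/d) * (d:ℝ)) := (Real.rpow_mul (hbase M) _ _).symm
      _ = (k M : ℝ) / (cd * M) := by rw [h1, Real.rpow_one]
  have hvol : ∀ (z : EuclideanSpace ℝ (Fin d)) (M : ℕ), 0 < M →
      (volume (Metric.closedBall z (r M))).toReal = (k M : ℝ) / M := by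
    intro z M hM
    rw [Measure.addHaar_closedBall _ z (hr0 M), finrank_euclideanSpace_fin,
      ENNReal.toReal_mul, ENNReal.toReal_ofReal (by positivity), hrpow M]
    rw [show (volume (Metric.ball (0 : EuclideanSpace ℝ (Fin d)) 1)).toReal = cd from rfl]
    have hM' : (0:ℝ) < M := Nat.cast_pos.2 hM
    field_simp
  set ν : Measure (EuclideanSpace ℝ (Fin d)) :=
    volume.withDensity (fun z => ENNReal.ofReal (f z)) with hνdef
  have hfint : Integrable f := by
    by_contra h
    rw [integral_undef h] at hf_int
    exact one_ne_zero hf_int.symm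
  have hνs : ∀ s : Set (EuclideanSpace ℝ (Fin d)), MeasurableSet s →
      (ν s).toReal = ∫ u in s, f u := by
    intro s hs
    rw [hνdef, withDensity_apply _ hs,
      ← ofReal_integral_eq_lintegral_ofReal hfint.integrableOn
        (Filter.Eventually.of_forall hf_nonneg)]
    exact ENNReal.toReal_ofReal (setIntegral_nonneg hs fun u _ => hf_nonneg u)
  have hμA : ∀ (i : ℕ) (s : Set (EuclideanSpace ℝ (Fin d))), MeasurableSet s →
      μ (X i ⁻¹' s) = ν s := by
    intro i s hs
    rw [← Measure.map_apply (hXm i) hs, hlaw i]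
  -- radius tends to zero
  have hblim : Tendsto (fun M => (k M : ℝ) / (cd * M)) atTop (nhds 0) := by
    have heq : (fun M : ℕ => (k M : ℝ) / (cd * M)) = fun M => ((k M : ℝ) / M) * (1/cd) := by
      funext M; rw [div_mul_div_comm, mul_one, mul_comm]
    rw [heq]
    simpa using hkM.mul_const (1/cd)
  have hrlim : Tendsto r atTop (nhds 0) := by
    have hc : ContinuousAt (fun t : ℝ => t ^ ((1:ℝ)/(d:ℝ))) 0 :=
      Real.continuousAt_rpow_const 0 _ (Or.inr (by positivity))
    have := hc.tendsto.comp hblim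
    rw [Real.zero_rpow (by positivity : ((1:ℝ)/(d:ℝ)) ≠ 0)] at this
    exact this
  -- local mean of f converges to f z
  have halpha : ∀ z : EuclideanSpace ℝ (Fin d),
      Tendsto (fun M : ℕ => (M:ℝ) * (ν (Metric.closedBall z (r M))).toReal / k M) atTop
        (nhds (f z)) := by
    intro z
    rw [Metric.tendsto_nhds]
    intro ε hε
    obtain ⟨δ, hδ, hδ2⟩ := Metric.continuousAt_iff.1 (hf_cont.continuousAt (x := z)) (ε/2) (half_pos hε)
    filter_upwards [eventually_gt_atTop 0, hk.eventually_ge_atTop 1,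
      hrlim.eventually (gt_mem_nhds hδ)] with M hM hkM1 hrδ
    have hks : (0:ℝ) < k M := lt_of_lt_of_le one_pos hkM1
    have hMs : (0:ℝ) < M := Nat.cast_pos.2 hM
    have hVol : (volume (Metric.closedBall z (r M))).toReal = (k M : ℝ) / M := hvol z M hM
    have hps : (ν (Metric.closedBall z (r M))).toReal = ∫ u in Metric.closedBall z (r M), f u :=
      hνs _ measurableSet_closedBall
    have hconst : ∫ _u in Metric.closedBall z (r M), f z = ((k M : ℝ)/M) * f z := by
      rw [setIntegral_const, measureReal_def, hVol, smul_eq_mul]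
    have hsub : (∫ u in Metric.closedBall z (r M), f u) - ((k M : ℝ)/M) * f z
        = ∫ u in Metric.closedBall z (r M), (f u - f z) := by
      rw [← hconst,
        ← integral_sub hfint.integrableOn
          (integrableOn_const measure_closedBall_lt_top.ne)]
    have hbound : |(∫ u in Metric.closedBall z (r M), f u) - ((k M : ℝ)/M) * f z|
        ≤ ε/2 * ((k M : ℝ)/M) := by
      rw [hsub, ← Real.norm_eq_abs, ← hVol]
      refine norm_setIntegral_le_of_norm_le_const measure_closedBall_lt_top (fun u hu => ?_)
      · have h1 : dist u z < δ := lt_of_le_of_lt (Metric.mem_closedBall.1 hu) hrδ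
        have := hδ2 h1
        rw [Real.dist_eq] at this
        rw [Real.norm_eq_abs]
        exact this.le
    have key : (M:ℝ) * (ν (Metric.closedBall z (r M))).toReal / k M - f z
        = ((M:ℝ)/(k M)) * ((∫ u in Metric.closedBall z (r M), f u) - ((k M : ℝ)/M) * f z) := by
      rw [hps]; field_simp
    rw [Real.dist_eq, key, abs_mul, abs_of_nonneg (by positivity : (0:ℝ) ≤ (M:ℝ)/(k M))]
    calc (M:ℝ)/(k M) * |(∫ u in Metric.closedBall z (r M), f u) - ((k M : ℝ)/M) * f z|
        ≤ (M:ℝ)/(k M) * (ε/2 * ((k M : ℝ)/M)) := by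
          exact mul_le_mul_of_nonneg_left hbound (by positivity)
      _ = ε/2 := by field_simp
      _ < ε := half_lt_self hε
  -- exact covariance formula
  have hcov : ∀ M : ℕ, 0 < k M → (∫ ω, ehat M x ω * ehat M y ω ∂μ)
      = -(M:ℝ) * (ν (Metric.closedBall x (r M))).toReal
          * (ν (Metric.closedBall y (r M))).toReal / (k M)^2 := by
    intro M hkM0
    have hk0 : ((k M : ℝ)) ≠ 0 := Nat.cast_ne_zero.2 hkM0.ne'
    set A : ℕ → Set Ω := fun i => X i ⁻¹' Metric.closedBall x (r M) with hA
    set B : ℕ → Set Ω := fun i => X i ⁻¹' Metric.closedBall y (r M) with hB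
    set S : Ω → ℝ := fun ω => ∑ i ∈ Finset.range M, (A i).indicator (1:Ω→ℝ) ω with hS
    set T : Ω → ℝ := fun ω => ∑ i ∈ Finset.range M, (B i).indicator (1:Ω→ℝ) ω with hT
    have hdisjsub : Metric.closedBall x (r M) ∩ Metric.closedBall y (r M)
        ⊆ Metric.sphere x (r M) := by
      rintro u ⟨hux, huy⟩
      have h1 : dist u x ≤ r M := Metric.mem_closedBall.1 hux
      have h2 : dist u y ≤ r M := Metric.mem_closedBall.1 huy
      have h3 := hdist M
      have h4 : dist x y ≤ dist x u + dist u y := dist_triangle x u y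
      have h5 : dist x u = dist u x := dist_comm x u
      have h6 : r M ≤ dist u x := by linarith
      exact Metric.mem_sphere.2 (le_antisymm h1 h6)
    have hν0 : ν (Metric.closedBall x (r M) ∩ Metric.closedBall y (r M)) = 0 := by
      refine measure_mono_null hdisjsub ?_
      exact (withDensity_absolutelyContinuous volume _) (Measure.addHaar_sphere _ _ _)
    have covS := cov_aux μ M A B
      (fun i => (hXm i) measurableSet_closedBall)
      (fun i => (hXm i) measurableSet_closedBall)
      (ν (Metric.closedBall x (r M))) (ν (Metric.closedBall y (r M)))
      (fun i => hμA i _ measurableSet_closedBall)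
      (fun i => hμA i _ measurableSet_closedBall)
      (fun i => by
        rw [hA, hB]
        dsimp only
        rw [← Set.preimage_inter,
          hμA i _ (measurableSet_closedBall.inter measurableSet_closedBall), hν0])
      (fun i j hij => by
        rw [hA, hB]
        dsimp only
        rw [(hindep.indepFun hij).measure_inter_preimage_eq_mul _ _
          measurableSet_closedBall measurableSet_closedBall,
          hμA i _ measurableSet_closedBall, hμA j _ measurableSet_closedBall])
      S T hS hT
    have hfx : ∀ ω, fhat M x ω = S ω / k M := by
      intro ω
      show (((Finset.range M).filter (fun i => X i ω ∈ Metric.closedBall x (r M))).card : ℝ) / k M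
        = S ω / k M
      congr 1
      rw [Finset.card_filter]
      push_cast
      rw [hS]
      refine Finset.sum_congr rfl fun i _ => ?_
      by_cases h : X i ω ∈ Metric.closedBall x (r M) <;>
        simp [hA, Set.indicator_apply, h]
    have hfy : ∀ ω, fhat M y ω = T ω / k M := by
      intro ω
      show (((Finset.range M).filter (fun i => X i ω ∈ Metric.closedBall y (r M))).card : ℝ) / k M
        = T ω / k M
      congr 1
      rw [Finset.card_filter]
      push_cast
      rw [hT]
      refine Finset.sum_congr rfl fun i _ => ?_
      by_cases h : X i ω ∈ Metric.closedBall y (r M) <;>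
        simp [hB, Set.indicator_apply, h]
    have hIfx : ∫ ω, fhat M x ω ∂μ = (∫ ω, S ω ∂μ) / k M := by
      rw [integral_congr_ae (Filter.Eventually.of_forall hfx), integral_div]
    have hIfy : ∫ ω, fhat M y ω ∂μ = (∫ ω, T ω ∂μ) / k M := by
      rw [integral_congr_ae (Filter.Eventually.of_forall hfy), integral_div]
    have hex : ∀ ω, ehat M x ω = (S ω - ∫ ω', S ω' ∂μ) / k M := by
      intro ω
      show fhat M x ω - ∫ ω', fhat M x ω' ∂μ = _
      rw [hfx ω, hIfx, sub_div]
    have hey : ∀ ω, ehat M y ω = (T ω - ∫ ω', T ω' ∂μ) / k M := by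
      intro ω
      show fhat M y ω - ∫ ω', fhat M y ω' ∂μ = _
      rw [hfy ω, hIfy, sub_div]
    calc ∫ ω, ehat M x ω * ehat M y ω ∂μ
        = ∫ ω, ((S ω - ∫ ω', S ω' ∂μ) * (T ω - ∫ ω', T ω' ∂μ)) / (k M)^2 ∂μ := by
          refine integral_congr_ae (Filter.Eventually.of_forall fun ω => ?_)
          show ehat M x ω * ehat M y ω
            = ((S ω - ∫ ω', S ω' ∂μ) * (T ω - ∫ ω', T ω' ∂μ)) / (k M)^2
          rw [hex ω, hey ω, div_mul_div_comm, ← sq]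
      _ = (∫ ω, (S ω - ∫ ω', S ω' ∂μ) * (T ω - ∫ ω', T ω' ∂μ) ∂μ) / (k M)^2 := integral_div _ _
      _ = _ := by rw [covS]
  -- assemble the asymptotics
  have hgf : ∀ᶠ M : ℕ in atTop, (1:ℝ)/(M:ℝ) = 0 →
      (∫ ω, ehat M x ω * ehat M y ω ∂μ) + f x * f y / M = 0 := by
    filter_upwards [eventually_gt_atTop 0] with M hM h0
    exact absurd h0 (one_div_ne_zero (Nat.cast_ne_zero.2 hM.ne'))
  rw [isLittleO_iff_tendsto' hgf]
  have hev : ∀ᶠ M : ℕ in atTop,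
      (-(((M:ℝ) * (ν (Metric.closedBall x (r M))).toReal / k M)
          * ((M:ℝ) * (ν (Metric.closedBall y (r M))).toReal / k M)) + f x * f y)
        = ((∫ ω, ehat M x ω * ehat M y ω ∂μ) + f x * f y / M) / ((1:ℝ)/(M:ℝ)) := by
    filter_upwards [eventually_gt_atTop 0, hk.eventually_ge_atTop 1] with M hM hkM1
    have hk0 : 0 < k M := by exact_mod_cast lt_of_lt_of_le one_pos hkM1
    have hk0' : ((k M : ℝ)) ≠ 0 := by positivity
    have hM0 : ((M:ℝ)) ≠ 0 := Nat.cast_ne_zero.2 hM.ne'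
    rw [hcov M hk0]
    field_simp
  refine Tendsto.congr' hev ?_
  have h1 := ((halpha x).mul (halpha y)).neg.add_const (f x * f y)
  simpa using h1
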